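/- Let h₂(σ) = σ² − 2 and let N₂(h₂)(σ) = −(h₂'(σ))² − (1/2) h₂(σ)² = −4σ² − (1/2)(σ²−2)². Then ∫_ℝ h₂(σ) · N₂(h₂)(σ) · e^{-σ²/4} dσ = −8 · ∫_ℝ h₂(σ)² · e^{-σ²/4} dσ. -/

import Mathlib

open MeasureTheory Real

lemma integrable_pow_exp_quarter (n : ℕ) :
    Integrable (fun x : ℝ => x ^ n * Real.exp (-x ^ 2 / 4)) := by
  have h := integrable_rpow_mul_exp_neg_mul_sq (b := (1 / 4 : ℝ)) (by norm_num)
    (s := (n : ℝ)) (lt_of_lt_of_le neg_one_lt_zero (Nat.cast_nonneg n))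
  simp only [Real.rpow_natCast] at h
  have : ∀ x : ℝ, -x ^ 2 / 4 = -(1 / 4) * x ^ 2 := fun x => by ring
  simp_rw [this]
  exact h

lemma moment_step (m : ℕ) :
    ∫ x : ℝ, x ^ (m + 2) * Real.exp (-x ^ 2 / 4)
      = 2 * (m + 1) * ∫ x : ℝ, x ^ m * Real.exp (-x ^ 2 / 4) := by
  have hderiv : ∀ x : ℝ, HasDerivAt (fun x : ℝ => x ^ (m + 1) * Real.exp (-x ^ 2 / 4))
      (((m : ℝ) + 1) * x ^ m * Real.exp (-x ^ 2 / 4)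
        - (1 / 2) * (x ^ (m + 2) * Real.exp (-x ^ 2 / 4))) x := by
    intro x
    have h1 : HasDerivAt (fun x : ℝ => x ^ (m + 1)) (((m : ℝ) + 1) * x ^ m) x := by
      simpa using hasDerivAt_pow (m + 1) x
    have h2 : HasDerivAt (fun x : ℝ => Real.exp (-x ^ 2 / 4))
        ((-x / 2) * Real.exp (-x ^ 2 / 4)) x := by
      have hx : HasDerivAt (fun x : ℝ => -x ^ 2 / 4) (-x / 2) x := by
        have := (hasDerivAt_pow 2 x).neg.div_const 4
        refine this.congr_deriv ?_
        norm_num; ring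
      simpa [mul_comm] using hx.exp
    have := h1.mul h2
    refine this.congr_deriv ?_
    ring
  have hf' : Integrable (fun x : ℝ => ((m : ℝ) + 1) * x ^ m * Real.exp (-x ^ 2 / 4)
      - (1 / 2) * (x ^ (m + 2) * Real.exp (-x ^ 2 / 4))) := by
    have := ((integrable_pow_exp_quarter m).const_mul ((m : ℝ) + 1)).sub
      ((integrable_pow_exp_quarter (m + 2)).const_mul (1 / 2))
    simpa [mul_assoc, Pi.sub_def] using this
  have hf : Integrable (fun x : ℝ => x ^ (m + 1) * Real.exp (-x ^ 2 / 4)) :=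
    integrable_pow_exp_quarter (m + 1)
  have hzero := integral_eq_zero_of_hasDerivAt_of_integrable hderiv hf' hf
  rw [integral_sub (by simpa [mul_assoc] using (integrable_pow_exp_quarter m).const_mul ((m : ℝ) + 1))
      ((integrable_pow_exp_quarter (m + 2)).const_mul (1 / 2))] at hzero
  simp only [mul_assoc, integral_const_mul] at hzero
  linarith

/-- With `h₂(σ) = σ² − 2` and `N₂(h₂)(σ) = −(h₂')² − (1/2) h₂² = −4σ² − (1/2)(σ²−2)²`,
one has `∫ h₂ N₂(h₂) e^{-σ²/4} dσ = −8 ∫ h₂² e^{-σ²/4} dσ`. -/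
theorem h2_quadratic_projection :
    ∫ σ : ℝ, (σ ^ 2 - 2) * (-4 * σ ^ 2 - (1 / 2) * (σ ^ 2 - 2) ^ 2) * Real.exp (-σ ^ 2 / 4)
      = -8 * ∫ σ : ℝ, (σ ^ 2 - 2) ^ 2 * Real.exp (-σ ^ 2 / 4) := by
  set M : ℕ → ℝ := fun k => ∫ x : ℝ, x ^ k * Real.exp (-x ^ 2 / 4) with hM
  have h2 : M 2 = 2 * M 0 := by
    have := moment_step 0; norm_num at this; simp only [hM]; convert this using 2 <;> norm_num
  have h4 : M 4 = 6 * M 2 := by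
    have := moment_step 2; norm_num at this; simpa [hM] using this
  have h6 : M 6 = 10 * M 4 := by
    have := moment_step 4; norm_num at this; simpa [hM] using this
  have expand : ∀ a b c d : ℝ,
      ∫ x : ℝ, (a * x ^ 6 + b * x ^ 4 + c * x ^ 2 + d) * Real.exp (-x ^ 2 / 4)
        = a * M 6 + b * M 4 + c * M 2 + d * M 0 := by
    intro a b c d
    have i6 := (integrable_pow_exp_quarter 6).const_mul a
    have i4 := (integrable_pow_exp_quarter 4).const_mul b
    have i2 := (integrable_pow_exp_quarter 2).const_mul c
    have i0 := (integrable_pow_exp_quarter 0).const_mul d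
    have key : (fun x : ℝ => (a * x ^ 6 + b * x ^ 4 + c * x ^ 2 + d) * Real.exp (-x ^ 2 / 4))
        = fun x : ℝ => (a * (x ^ 6 * Real.exp (-x ^ 2 / 4)) + b * (x ^ 4 * Real.exp (-x ^ 2 / 4)))
          + (c * (x ^ 2 * Real.exp (-x ^ 2 / 4)) + d * (x ^ 0 * Real.exp (-x ^ 2 / 4))) := by
      funext x; ring
    have e1 : ∫ x : ℝ, ((a * (x ^ 6 * Real.exp (-x ^ 2 / 4)) + b * (x ^ 4 * Real.exp (-x ^ 2 / 4)))
          + (c * (x ^ 2 * Real.exp (-x ^ 2 / 4)) + d * (x ^ 0 * Real.exp (-x ^ 2 / 4))))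
        = (∫ x : ℝ, (a * (x ^ 6 * Real.exp (-x ^ 2 / 4)) + b * (x ^ 4 * Real.exp (-x ^ 2 / 4))))
          + ∫ x : ℝ, (c * (x ^ 2 * Real.exp (-x ^ 2 / 4)) + d * (x ^ 0 * Real.exp (-x ^ 2 / 4))) :=
      integral_add (i6.add i4) (i2.add i0)
    have e2 : ∫ x : ℝ, (a * (x ^ 6 * Real.exp (-x ^ 2 / 4)) + b * (x ^ 4 * Real.exp (-x ^ 2 / 4)))
        = (∫ x : ℝ, a * (x ^ 6 * Real.exp (-x ^ 2 / 4)))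
          + ∫ x : ℝ, b * (x ^ 4 * Real.exp (-x ^ 2 / 4)) := integral_add i6 i4
    have e3 : ∫ x : ℝ, (c * (x ^ 2 * Real.exp (-x ^ 2 / 4)) + d * (x ^ 0 * Real.exp (-x ^ 2 / 4)))
        = (∫ x : ℝ, c * (x ^ 2 * Real.exp (-x ^ 2 / 4)))
          + ∫ x : ℝ, d * (x ^ 0 * Real.exp (-x ^ 2 / 4)) := integral_add i2 i0
    rw [key, e1, e2, e3, integral_const_mul, integral_const_mul, integral_const_mul,
      integral_const_mul]
    simp only [hM]
    ring
  have hL : ∫ σ : ℝ, (σ ^ 2 - 2) * (-4 * σ ^ 2 - (1 / 2) * (σ ^ 2 - 2) ^ 2) * Real.exp (-σ ^ 2 / 4)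
      = (-(1/2)) * M 6 + (-1) * M 4 + 2 * M 2 + 4 * M 0 := by
    rw [← expand]
    congr 1; funext x; ring
  have hR : ∫ σ : ℝ, (σ ^ 2 - 2) ^ 2 * Real.exp (-σ ^ 2 / 4)
      = 0 * M 6 + 1 * M 4 + (-4) * M 2 + 4 * M 0 := by
    rw [← expand]
    congr 1; funext x; ring
  rw [hL, hR, h6, h4, h2]; ring
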